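/- Let k ≥ 1 and n ≥ t ≥ 1. Let u and v be words of length t over Σ_k such that (u,v) is mutually unbordered and u ≠ v. Let G_{u,v}(m) denote the number of unbordered words of length m over Σ_k that have u as a prefix and v as a suffix. Then G_{u,v}(n) = 0 if n < 2t, and G_{u,v}(n) = k^{n−2t} − Σ_{i=2t}^{⌊n/2⌋} G_{u,v}(i)·k^{n−2i} if n ≥ 2t. -/

import Mathlib

open Classical Finset Filter

/-- A border of `w`: a non-empty word that is both a proper prefix and a suffix of `w`. -/
def IsBorder {k : ℕ} (w b : List (Fin k)) : Prop :=
  b ≠ [] ∧ b ≠ w ∧ b <+: w ∧ b <:+ w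

/-- A word is unbordered if it has no border. -/
def Unbordered {k : ℕ} (w : List (Fin k)) : Prop :=
  ∀ b, ¬ IsBorder w b

/-- A right-border of `(u,v)`: a non-empty proper suffix of `u` that is a proper prefix of `v`. -/
def IsRightBorder {k : ℕ} (u v b : List (Fin k)) : Prop :=
  b ≠ [] ∧ b <:+ u ∧ b ≠ u ∧ b <+: v ∧ b ≠ v

/-- A left-border of `(u,v)`: a non-empty proper prefix of `u` that is a proper suffix of `v`. -/
def IsLeftBorder {k : ℕ} (u v b : List (Fin k)) : Prop :=
  b ≠ [] ∧ b <+: u ∧ b ≠ u ∧ b <:+ v ∧ b ≠ v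

def MutuallyBordered {k : ℕ} (u v : List (Fin k)) : Prop :=
  (∃ b, IsRightBorder u v b) ∧ (∃ b, IsLeftBorder u v b)

def MutuallyUnbordered {k : ℕ} (u v : List (Fin k)) : Prop :=
  (¬ ∃ b, IsRightBorder u v b) ∧ (¬ ∃ b, IsLeftBorder u v b)

def RightBordered {k : ℕ} (u v : List (Fin k)) : Prop :=
  (∃ b, IsRightBorder u v b) ∧ (¬ ∃ b, IsLeftBorder u v b)

/-- `lso u v`: the length of the shortest right-border of `(u,v)`, or `0` if there is none. -/
noncomputable def lso {k : ℕ} (u v : List (Fin k)) : ℕ :=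
  sInf {m | ∃ b : List (Fin k), IsRightBorder u v b ∧ b.length = m}

def IsShortestRightBorder {k : ℕ} (u v b : List (Fin k)) : Prop :=
  IsRightBorder u v b ∧ ∀ b', IsRightBorder u v b' → b.length ≤ b'.length

def IsShortestLeftBorder {k : ℕ} (u v b : List (Fin k)) : Prop :=
  IsLeftBorder u v b ∧ ∀ b', IsLeftBorder u v b' → b.length ≤ b'.length

/-- The finite set of all length-`n` words over `Σ_k`. -/
def Words (k n : ℕ) : Finset (List (Fin k)) :=
  (Finset.univ : Finset (Fin n → Fin k)).image List.ofFn

/-- `UB k n`: the number of unbordered words of length `n` over `Σ_k`. -/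
noncomputable def UB (k n : ℕ) : ℕ :=
  ((Words k n).filter Unbordered).card

/-- `M k n`: the number of mutually bordered pairs of length-`n` words over `Σ_k`. -/
noncomputable def M (k n : ℕ) : ℕ :=
  ((Words k n ×ˢ Words k n).filter (fun p => MutuallyBordered p.1 p.2)).card

/-- `R k n`: the number of right-bordered pairs of length-`n` words over `Σ_k`. -/
noncomputable def R (k n : ℕ) : ℕ :=
  ((Words k n ×ˢ Words k n).filter (fun p => RightBordered p.1 p.2)).card

/-- `U k n`: the number of mutually unbordered pairs of length-`n` words over `Σ_k`. -/
noncomputable def U (k n : ℕ) : ℕ :=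
  ((Words k n ×ˢ Words k n).filter (fun p => MutuallyUnbordered p.1 p.2)).card

/-- `G u v m`: the number of unbordered words of length `m` over `Σ_k` having
`u` as a prefix and `v` as a suffix. -/
noncomputable def G {k : ℕ} (u v : List (Fin k)) (m : ℕ) : ℕ :=
  ((Words k m).filter (fun w => Unbordered w ∧ u <+: w ∧ v <:+ w)).card


lemma mem_Words {k n : ℕ} {w : List (Fin k)} : w ∈ Words k n ↔ w.length = n := by
  constructor
  · intro h
    simp only [Words, Finset.mem_image] at h
    obtain ⟨f, -, rfl⟩ := h
    simp
  · intro h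
    simp only [Words, Finset.mem_image]
    refine ⟨fun i => w.get (Fin.cast h.symm i), Finset.mem_univ _, ?_⟩
    apply List.ext_getElem <;> simp [h]

lemma card_Words (k n : ℕ) : (Words k n).card = k ^ n := by
  rw [Words, Finset.card_image_of_injective _ List.ofFn_injective]
  simp

lemma no_overlap {k t : ℕ} {u v : List (Fin k)} (hu : u.length = t) (hv : v.length = t)
    (hmu : MutuallyUnbordered u v) (hne : u ≠ v)
    {w : List (Fin k)} (hpu : u <+: w) (hsv : v <:+ w)
    (h1 : t ≤ w.length) (h2 : w.length < 2 * t) : False := by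
  rcases eq_or_lt_of_le h1 with heq | hlt
  · exact hne ((hpu.eq_of_length (by omega)).trans (hsv.eq_of_length (by omega)).symm)
  · apply hmu.1
    refine ⟨u.drop (w.length - t), ?_, List.drop_suffix _ _, ?_, ?_, ?_⟩
    · intro hc
      have := congrArg List.length hc
      simp [hu] at this
      omega
    · intro hc
      have := congrArg List.length hc
      simp [hu] at this
      omega
    · have h5 : u = w.take t := by
        have := List.prefix_iff_eq_take.mp hpu; rwa [hu] at this
      have h6 : v = w.drop (w.length - t) := by
        have := List.suffix_iff_eq_drop.mp hsv; rwa [hv] at this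
      calc u.drop (w.length - t) = (w.take t).drop (w.length - t) := by rw [← h5]
        _ = (w.drop (w.length - t)).take (t - (w.length - t)) := by rw [List.drop_take]
        _ = v.take (t - (w.length - t)) := by rw [← h6]
        _ <+: v := List.take_prefix _ _
    · intro hc
      have := congrArg List.length hc
      simp [hu, hv] at this
      omega

lemma border_two_t {k t : ℕ} {u v : List (Fin k)} (hu : u.length = t) (hv : v.length = t)
    (hmu : MutuallyUnbordered u v) (hne : u ≠ v)
    {w b : List (Fin k)} (hpu : u <+: w) (hsv : v <:+ w) (hb : IsBorder w b) :
    2 * t ≤ b.length := by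
  obtain ⟨hb0, hbw, hbp, hbs⟩ := hb
  by_contra hlt
  push_neg at hlt
  rcases lt_trichotomy b.length t with h | h | h
  · apply hmu.2
    refine ⟨b, hb0, ?_, ?_, ?_, ?_⟩
    · exact List.prefix_of_prefix_length_le hbp hpu (by omega)
    · intro hc; rw [hc] at h; omega
    · exact List.suffix_of_suffix_length_le hbs hsv (by omega)
    · intro hc; rw [hc] at h; omega
  · have h1 : b = u := (List.prefix_of_prefix_length_le hbp hpu (by omega)).eq_of_length (by omega)
    have h2 : b = v := (List.suffix_of_suffix_length_le hbs hsv (by omega)).eq_of_length (by omega)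
    exact hne (h1.symm.trans h2)
  · have hub : u <+: b := List.prefix_of_prefix_length_le hpu hbp (by omega)
    have hvb : v <:+ b := List.suffix_of_suffix_length_le hsv hbs (by omega)
    exact no_overlap hu hv hmu hne hub hvb (by omega) (by omega)

lemma border_le_half {k : ℕ} {w b : List (Fin k)} (hb : IsBorder w b) (hub : Unbordered b) :
    2 * b.length ≤ w.length := by
  obtain ⟨hb0, hbw, hbp, hbs⟩ := hb
  by_contra h
  push_neg at h
  have hin : b.length ≤ w.length := hbp.length_le
  have hilt : b.length < w.length := lt_of_le_of_ne hin (fun hc => hbw (hbp.eq_of_length hc))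
  apply hub (b.drop (w.length - b.length))
  have hbt : b = w.take b.length := List.prefix_iff_eq_take.mp hbp
  have hbd : b = w.drop (w.length - b.length) := List.suffix_iff_eq_drop.mp hbs
  refine ⟨?_, ?_, ?_, List.drop_suffix _ _⟩
  · intro hc; have := congrArg List.length hc; simp at this; omega
  · intro hc; have := congrArg List.length hc; simp at this; omega
  · calc b.drop (w.length - b.length)
        = (w.take b.length).drop (w.length - b.length) := by rw [← hbt]
      _ = (w.drop (w.length - b.length)).take (b.length - (w.length - b.length)) := by
          rw [List.drop_take]
      _ = b.take (b.length - (w.length - b.length)) := by rw [← hbd]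
      _ <+: b := List.take_prefix _ _

lemma border_unique {k : ℕ} {w : List (Fin k)} {i j : ℕ}
    (hi : IsBorder w (w.take i) ∧ Unbordered (w.take i))
    (hj : IsBorder w (w.take j) ∧ Unbordered (w.take j))
    (hiw : i ≤ w.length) (hjw : j ≤ w.length) : i = j := by
  by_contra hij
  wlog h : i < j generalizing i j
  · exact this hj hi hjw hiw (Ne.symm hij) (by omega)
  apply hj.2 (w.take i)
  refine ⟨hi.1.1, ?_, ?_, ?_⟩
  · intro hc
    have := congrArg List.length hc
    simp at this
    omega
  · exact List.prefix_of_prefix_length_le (List.take_prefix _ _) (List.take_prefix _ _)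
      (by simp; omega)
  · exact List.suffix_of_suffix_length_le hi.1.2.2.2 hj.1.2.2.2 (by simp; omega)

lemma take_ne_len {k : ℕ} {w : List (Fin k)} {i : ℕ} (h : IsBorder w (w.take i)) :
    i < w.length := by
  by_contra hc
  push_neg at hc
  exact h.2.1 (List.take_of_length_le hc)

lemma exists_unbordered_border {k : ℕ} {w b : List (Fin k)} (hb : IsBorder w b) :
    ∃ i, IsBorder w (w.take i) ∧ Unbordered (w.take i) := by
  have hex : ∃ m, IsBorder w (w.take m) := by
    refine ⟨b.length, ?_⟩
    rwa [← List.prefix_iff_eq_take.mp hb.2.2.1]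
  refine ⟨Nat.find hex, Nat.find_spec hex, ?_⟩
  intro c hc
  obtain ⟨hc0, hcb, hcp, hcs⟩ := hc
  have hspec := Nat.find_spec hex
  have hiw : Nat.find hex < w.length := take_ne_len hspec
  have hclen : c.length < Nat.find hex := by
    have h1 : c.length ≤ (w.take (Nat.find hex)).length := hcp.length_le
    rw [List.length_take] at h1
    rcases lt_or_eq_of_le (by omega : c.length ≤ Nat.find hex) with h | h
    · exact h
    · exact absurd (hcp.eq_of_length (by simp; omega)) hcb
  apply Nat.find_min hex hclen
  have hcw_p : c <+: w := hcp.trans (List.take_prefix _ _)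
  have hcw_s : c <:+ w := hcs.trans hspec.2.2.2
  rw [← (List.prefix_iff_eq_take.mp hcw_p)]
  refine ⟨hc0, ?_, hcw_p, hcw_s⟩
  intro hcw
  rw [hcw] at hclen
  omega

lemma card_S {k t n : ℕ} {u v : List (Fin k)} (h2t : 2*t ≤ n)
    (hu : u.length = t) (hv : v.length = t) :
    ((Words k n).filter (fun w => u <+: w ∧ v <:+ w)).card = k ^ (n - 2*t) := by
  rw [← card_Words k (n - 2*t)]
  apply Finset.card_nbij' (fun w => (w.drop t).take (n - 2*t)) (fun m => u ++ m ++ v)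
  · intro w hw
    rw [Finset.mem_coe, Finset.mem_filter, mem_Words] at hw
    rw [Finset.mem_coe, mem_Words, List.length_take, List.length_drop, hw.1]
    omega
  · intro m hm
    rw [Finset.mem_coe, mem_Words] at hm
    rw [Finset.mem_coe, Finset.mem_filter, mem_Words]
    refine ⟨by simp; omega, ?_, ?_⟩
    · exact (List.prefix_append u (m ++ v)).trans (by dsimp only; rw [List.append_assoc])
    · dsimp only; rw [List.append_assoc]
      exact (List.suffix_append m v).trans (List.suffix_append u (m ++ v))
  · intro w hw
    rw [Finset.mem_coe, Finset.mem_filter, mem_Words] at hw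
    obtain ⟨hwl, hpu, hsv⟩ := hw
    have h1 : u = w.take t := by
      have := List.prefix_iff_eq_take.mp hpu; rwa [hu] at this
    have h2 : v = w.drop (n - t) := by
      have := List.suffix_iff_eq_drop.mp hsv; rwa [hv, hwl] at this
    have h3 : (w.drop t).drop (n - 2*t) = v := by
      rw [List.drop_drop, show t + (n - 2*t) = n - t from by omega, ← h2]
    calc u ++ (w.drop t).take (n - 2*t) ++ v
        = w.take t ++ ((w.drop t).take (n - 2*t) ++ (w.drop t).drop (n - 2*t)) := by
          rw [h1, h3, List.append_assoc]
      _ = w := by rw [List.take_append_drop, List.take_append_drop]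
  · intro m hm
    rw [Finset.mem_coe, mem_Words] at hm
    dsimp only; rw [List.append_assoc, List.drop_left' hu, List.take_left' hm]

lemma card_C {k t n i : ℕ} {u v : List (Fin k)} (ht : 1 ≤ t) (h2t : 2*t ≤ i) (h2i : 2*i ≤ n)
    (hu : u.length = t) (hv : v.length = t) :
    ((Words k n).filter (fun w => (u <+: w ∧ v <:+ w) ∧
        IsBorder w (w.take i) ∧ Unbordered (w.take i))).card
      = G u v i * k ^ (n - 2*i) := by
  rw [G, ← card_Words k (n - 2*i), ← Finset.card_product]
  apply Finset.card_nbij' (fun w => (w.take i, (w.drop i).take (n - 2*i)))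
    (fun p => p.1 ++ p.2 ++ p.1)
  · intro w hw
    rw [Finset.mem_coe, Finset.mem_filter, mem_Words] at hw
    obtain ⟨hwl, ⟨hpu, hsv⟩, hbord, hunb⟩ := hw
    rw [Finset.mem_coe, Finset.mem_product, Finset.mem_filter, mem_Words, mem_Words]
    refine ⟨⟨by rw [List.length_take]; omega, hunb, ?_, ?_⟩, ?_⟩
    · exact List.prefix_of_prefix_length_le hpu (List.take_prefix _ _)
        (by rw [List.length_take]; omega)
    · exact List.suffix_of_suffix_length_le hsv hbord.2.2.2
        (by rw [List.length_take]; omega)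
    · rw [List.length_take, List.length_drop, hwl]; omega
  · intro p hp
    obtain ⟨b, m⟩ := p
    rw [Finset.mem_coe, Finset.mem_product, Finset.mem_filter, mem_Words, mem_Words] at hp
    dsimp only at hp
    obtain ⟨⟨hbl, hbu, hpub, hsvb⟩, hml⟩ := hp
    have hbne : b ≠ [] := by
      intro hc; rw [hc] at hbl; simp at hbl; omega
    have hbpre : b <+: b ++ m ++ b := by
      rw [List.append_assoc]; exact List.prefix_append _ _
    have hbsuf : b <:+ b ++ m ++ b := List.suffix_append _ _
    have htake : (b ++ m ++ b).take i = b := by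
      rw [List.append_assoc, List.take_left' hbl]
    rw [Finset.mem_coe, Finset.mem_filter, mem_Words]
    refine ⟨by simp; omega, ⟨hpub.trans hbpre, hsvb.trans hbsuf⟩, ?_, ?_⟩
    · rw [htake]
      refine ⟨hbne, ?_, hbpre, hbsuf⟩
      intro hc
      have h9 := congrArg List.length hc
      simp only [List.length_append] at h9
      omega
    · rw [htake]; exact hbu
  · intro w hw
    rw [Finset.mem_coe, Finset.mem_filter, mem_Words] at hw
    obtain ⟨hwl, ⟨hpu, hsv⟩, hbord, hunb⟩ := hw
    have h4 : w.take i = w.drop (n - i) := by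
      have := List.suffix_iff_eq_drop.mp hbord.2.2.2
      rwa [List.length_take, hwl, show min i n = i from by omega] at this
    have h5 : (w.drop i).drop (n - 2*i) = w.take i := by
      rw [List.drop_drop, show i + (n - 2*i) = n - i from by omega, ← h4]
    calc w.take i ++ (w.drop i).take (n - 2*i) ++ w.take i
        = w.take i ++ ((w.drop i).take (n - 2*i) ++ (w.drop i).drop (n - 2*i)) := by
          rw [h5, List.append_assoc]
      _ = w := by rw [List.take_append_drop, List.take_append_drop]
  · intro p hp
    obtain ⟨b, m⟩ := p
    rw [Finset.mem_coe, Finset.mem_product, Finset.mem_filter, mem_Words, mem_Words] at hp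
    dsimp only at hp
    obtain ⟨⟨hbl, -⟩, hml⟩ := hp
    simp only [Prod.mk.injEq]
    constructor
    · rw [List.append_assoc, List.take_left' hbl]
    · rw [List.append_assoc, List.drop_left' hbl, List.take_left' hml]

lemma key_count {k t n : ℕ} {u v : List (Fin k)} (ht : 1 ≤ t) (h2t : 2*t ≤ n)
    (hu : u.length = t) (hv : v.length = t)
    (hmu : MutuallyUnbordered u v) (hne : u ≠ v) :
    k ^ (n - 2*t) = G u v n + ∑ i ∈ Finset.Icc (2*t) (n/2), G u v i * k ^ (n - 2*i) := by
  classical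
  rw [← card_S h2t hu hv]
  set C : ℕ → Finset (List (Fin k)) := fun i =>
    (Words k n).filter (fun w => (u <+: w ∧ v <:+ w) ∧
      IsBorder w (w.take i) ∧ Unbordered (w.take i)) with hC
  have hset : (Words k n).filter (fun w => u <+: w ∧ v <:+ w)
      = (Words k n).filter (fun w => Unbordered w ∧ u <+: w ∧ v <:+ w)
        ∪ (Finset.Icc (2*t) (n/2)).biUnion C := by
    ext w
    simp only [Finset.mem_union, Finset.mem_filter, Finset.mem_biUnion, Finset.mem_Icc, hC]
    constructor
    · rintro ⟨hw, hpu, hsv⟩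
      by_cases hunb : Unbordered w
      · exact Or.inl ⟨hw, hunb, hpu, hsv⟩
      · right
        rw [Unbordered] at hunb
        push_neg at hunb
        obtain ⟨b, hb⟩ := hunb
        obtain ⟨i, hib, hiu⟩ := exists_unbordered_border hb
        have hwl := mem_Words.mp hw
        have hilt : i < w.length := take_ne_len hib
        have h1 : 2*t ≤ i := by
          have := border_two_t hu hv hmu hne hpu hsv hib
          rwa [List.length_take, show min i w.length = i from by omega] at this
        have h2 : 2*i ≤ n := by
          have := border_le_half hib hiu
          rw [List.length_take] at this
          omega
        exact ⟨i, ⟨h1, by omega⟩, hw, ⟨hpu, hsv⟩, hib, hiu⟩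
    · rintro (⟨hw, -, hpu, hsv⟩ | ⟨i, -, hw, ⟨hpu, hsv⟩, -⟩) <;> exact ⟨hw, hpu, hsv⟩
  have hd1 : Disjoint ((Words k n).filter (fun w => Unbordered w ∧ u <+: w ∧ v <:+ w))
      ((Finset.Icc (2*t) (n/2)).biUnion C) := by
    rw [Finset.disjoint_left]
    intro w hw hw2
    rw [Finset.mem_filter] at hw
    rw [Finset.mem_biUnion] at hw2
    obtain ⟨i, -, hwi⟩ := hw2
    rw [hC] at hwi
    rw [Finset.mem_filter] at hwi
    exact hw.2.1 _ hwi.2.2.1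
  have hd2 : ∀ i ∈ Finset.Icc (2*t) (n/2), ∀ j ∈ Finset.Icc (2*t) (n/2), i ≠ j →
      Disjoint (C i) (C j) := by
    intro i hi j hj hij
    rw [Finset.mem_Icc] at hi hj
    rw [Finset.disjoint_left]
    intro w hwi hwj
    rw [hC, Finset.mem_filter] at hwi hwj
    have hwl := mem_Words.mp hwi.1
    exact hij (border_unique ⟨hwi.2.2.1, hwi.2.2.2⟩ ⟨hwj.2.2.1, hwj.2.2.2⟩
      (by omega) (by omega))
  rw [hset, Finset.card_union_of_disjoint hd1, Finset.card_biUnion hd2]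
  congr 1
  apply Finset.sum_congr rfl
  intro i hi
  rw [Finset.mem_Icc] at hi
  rw [hC]
  exact card_C ht hi.1 (by omega) hu hv

theorem stmt5 (k t n : ℕ) (hk : 1 ≤ k) (ht : 1 ≤ t) (htn : t ≤ n)
    (u v : List (Fin k)) (hu : u.length = t) (hv : v.length = t)
    (hmu : MutuallyUnbordered u v) (hne : u ≠ v) :
    (n < 2 * t → G u v n = 0) ∧
    (2 * t ≤ n →
      (G u v n : ℤ) = (k : ℤ) ^ (n - 2 * t) -
        ∑ i ∈ Finset.Icc (2 * t) (n / 2), (G u v i : ℤ) * (k : ℤ) ^ (n - 2 * i)) := by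
  constructor
  · intro hlt
    rw [G, Finset.card_eq_zero, Finset.filter_eq_empty_iff]
    intro w hw
    rintro ⟨-, hpu, hsv⟩
    have hwl := mem_Words.mp hw
    have hle : t ≤ w.length := by
      have := hpu.length_le; omega
    exact no_overlap hu hv hmu hne hpu hsv hle (by omega)
  · intro hge
    have key := key_count ht hge hu hv hmu hne
    have := congrArg (Nat.cast : ℕ → ℤ) key
    push_cast at this
    linarith
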